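/- arXiv:1309.0636 — 6 statements merged into one kernel-verified Lean document; each statement's English description precedes it below -/
import Mathlib

section
/- Let G be a group, i₁, i₂, s nonnegative integers with i₁ ≤ s and i₂ ≤ s, and suppose that [G⁽ⁱ¹⁺¹⁾, G⁽ⁱ²⁾] = 1 and [G⁽ⁱ¹⁾, G⁽ⁱ²⁺¹⁾] = 1. Then for all a ∈ G⁽ⁱ¹⁾, b ∈ G⁽ⁱ²⁾, and x ∈ G⁽ˢ⁾, one has [a,b]ˣ = [a,b]. -/
open scoped commutatorElement

lemma derivedSeries_antitone' {G : Type*} [Group G] : Antitone (derivedSeries G) := by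
  refine antitone_nat_of_succ_le fun n => ?_
  haveI := derivedSeries_normal G n
  rw [derivedSeries_succ]
  exact Subgroup.commutator_le_left _ _

theorem stmt_2 {G : Type*} [Group G] (i₁ i₂ s : ℕ) (h₁ : i₁ ≤ s) (h₂ : i₂ ≤ s)
    (H₁ : ⁅derivedSeries G (i₁ + 1), derivedSeries G i₂⁆ = (⊥ : Subgroup G))
    (H₂ : ⁅derivedSeries G i₁, derivedSeries G (i₂ + 1)⁆ = (⊥ : Subgroup G)) :
    ∀ a ∈ derivedSeries G i₁, ∀ b ∈ derivedSeries G i₂, ∀ x ∈ derivedSeries G s,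
      x⁻¹ * ⁅a, b⁆ * x = ⁅a, b⁆ := by
  intro a ha b hb x hx
  have key : ⁅⁅a, b⁆, x⁆ = 1 := by
    rcases le_total i₁ i₂ with h | h
    · have hc : ⁅a, b⁆ ∈ derivedSeries G (i₁ + 1) := by
        rw [derivedSeries_succ]
        exact Subgroup.commutator_mem_commutator ha (derivedSeries_antitone' h hb)
      have := Subgroup.commutator_mem_commutator hc (derivedSeries_antitone' h₂ hx)
      rwa [H₁, Subgroup.mem_bot] at this
    · have hc : ⁅a, b⁆ ∈ derivedSeries G (i₂ + 1) := by
        rw [derivedSeries_succ]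
        exact Subgroup.commutator_mem_commutator (derivedSeries_antitone' h ha) hb
      have := Subgroup.commutator_mem_commutator (derivedSeries_antitone' h₁ hx) hc
      rw [H₂, Subgroup.mem_bot] at this
      rw [← commutatorElement_inv, this, inv_one]
  have hcomm : ⁅a, b⁆ * x = x * ⁅a, b⁆ := by
    have := commutatorElement_eq_one_iff_mul_comm.mp key
    exact this
  rw [mul_assoc, hcomm, ← mul_assoc, inv_mul_cancel, one_mul]
end

section
/- Let G be a group and i₁, i₂ nonnegative integers such that [G⁽ⁱ¹⁺¹⁾, G⁽ⁱ²⁾] = 1 and [G⁽ⁱ¹⁾, G⁽ⁱ²⁺¹⁾] = 1. Then the subgroup [G⁽ⁱ¹⁾, G⁽ⁱ²⁾] is abelian. -/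
open scoped commutatorElement

theorem stmt_3 {G : Type*} [Group G] (i₁ i₂ : ℕ)
    (H₁ : ⁅derivedSeries G (i₁ + 1), derivedSeries G i₂⁆ = (⊥ : Subgroup G))
    (H₂ : ⁅derivedSeries G i₁, derivedSeries G (i₂ + 1)⁆ = (⊥ : Subgroup G)) :
    ∀ x ∈ ⁅derivedSeries G i₁, derivedSeries G i₂⁆,
      ∀ y ∈ ⁅derivedSeries G i₁, derivedSeries G i₂⁆, x * y = y * x := by
  set A := derivedSeries G i₁ with hA
  set B := derivedSeries G i₂ with hB
  set A' := derivedSeries G (i₁ + 1) with hA'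
  set B' := derivedSeries G (i₂ + 1) with hB'
  have nA : A.Normal := derivedSeries_normal G i₁
  have nB : B.Normal := derivedSeries_normal G i₂
  have nA' : A'.Normal := derivedSeries_normal G (i₁ + 1)
  have nB' : B'.Normal := derivedSeries_normal G (i₂ + 1)
  -- C1 : elements of A' commute with elements of B
  have C1 : ∀ u ∈ A', ∀ v ∈ B, u * v = v * u := by
    intro u hu v hv
    have : ⁅u, v⁆ ∈ (⊥ : Subgroup G) := H₁ ▸ Subgroup.commutator_mem_commutator hu hv
    rw [Subgroup.mem_bot, commutatorElement_def, mul_inv_eq_one, mul_inv_eq_iff_eq_mul] at this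
    simpa using this
  -- C2 : elements of A commute with elements of B'
  have C2 : ∀ u ∈ A, ∀ v ∈ B', u * v = v * u := by
    intro u hu v hv
    have : ⁅u, v⁆ ∈ (⊥ : Subgroup G) := H₂ ▸ Subgroup.commutator_mem_commutator hu hv
    rw [Subgroup.mem_bot, commutatorElement_def, mul_inv_eq_one, mul_inv_eq_iff_eq_mul] at this
    simpa using this
  -- L3 : elements of B' commute with commutators ⁅a,b⁆, a ∈ A, b ∈ B
  have L3 : ∀ v ∈ B', ∀ a ∈ A, ∀ b ∈ B, v * ⁅a, b⁆ = ⁅a, b⁆ * v := by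
    intro v hv a ha b hb
    have hw : b⁻¹ * v * b ∈ B' := by
      simpa using nB'.conj_mem v hv b⁻¹
    have h1 : v * a = a * v := (C2 a ha v hv).symm
    have h2 : (b⁻¹ * v * b) * a⁻¹ = a⁻¹ * (b⁻¹ * v * b) := (C2 a⁻¹ (A.inv_mem ha) _ hw).symm
    rw [commutatorElement_def]
    calc v * (a * b * a⁻¹ * b⁻¹) = a * v * b * a⁻¹ * b⁻¹ := by
          rw [← mul_assoc, ← mul_assoc, ← mul_assoc, h1]
      _ = a * b * (b⁻¹ * v * b) * a⁻¹ * b⁻¹ := by group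
      _ = a * b * a⁻¹ * (b⁻¹ * v * b) * b⁻¹ := by
          rw [mul_assoc (a*b), h2, ← mul_assoc]
      _ = a * b * a⁻¹ * b⁻¹ * v := by group
  -- L4 : elements of A' commute with commutators ⁅a,b⁆
  have L4 : ∀ u ∈ A', ∀ a ∈ A, ∀ b ∈ B, u * ⁅a, b⁆ = ⁅a, b⁆ * u := by
    intro u hu a ha b hb
    have hw : a⁻¹ * u * a ∈ A' := by
      simpa using nA'.conj_mem u hu a⁻¹
    have h1 : (a⁻¹ * u * a) * b = b * (a⁻¹ * u * a) := C1 _ hw b hb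
    have h2 : u * b⁻¹ = b⁻¹ * u := C1 u hu b⁻¹ (B.inv_mem hb)
    rw [commutatorElement_def]
    calc u * (a * b * a⁻¹ * b⁻¹) = a * (a⁻¹ * u * a) * b * a⁻¹ * b⁻¹ := by group
      _ = a * (b * (a⁻¹ * u * a)) * a⁻¹ * b⁻¹ := by rw [mul_assoc a, h1]
      _ = a * b * a⁻¹ * (u * b⁻¹) := by group
      _ = a * b * a⁻¹ * b⁻¹ * u := by rw [h2, ← mul_assoc]
  -- Conjugation by a ∈ A moves to the right component
  have ConjA : ∀ a ∈ A, ∀ x ∈ A, ∀ y ∈ B, a * ⁅x, y⁆ * a⁻¹ = ⁅x, a * y * a⁻¹⁆ := by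
    intro a ha x hx y hy
    have hy' : a * y * a⁻¹ ∈ B := nB.conj_mem y hy a
    have hα : ⁅a, x⁆ ∈ A' := by
      rw [hA', derivedSeries_succ]
      exact Subgroup.commutator_mem_commutator ha hx
    -- a * ⁅x,y⁆ * a⁻¹ = ⁅a x a⁻¹, a y a⁻¹⁆ = ⁅⁅a,x⁆ * x, y'⁆
    have key : a * ⁅x, y⁆ * a⁻¹ = ⁅⁅a, x⁆ * x, a * y * a⁻¹⁆ := by
      simp only [commutatorElement_def]; group
    rw [key]
    set α := ⁅a, x⁆ with hαdef
    set y' := a * y * a⁻¹ with hy'def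
    have h1 : α * y' = y' * α := C1 α hα y' hy'
    have h2 : α * ⁅x, y'⁆ = ⁅x, y'⁆ * α := L4 α hα x hx y' hy'
    have : ⁅α * x, y'⁆ = α * ⁅x, y'⁆ * α⁻¹ := by
      rw [commutatorElement_def, commutatorElement_def]
      calc α * x * y' * (α * x)⁻¹ * y'⁻¹ = α * (x * y' * x⁻¹) * α⁻¹ * y'⁻¹ := by group
        _ = α * (x * y' * x⁻¹) * (α⁻¹ * y'⁻¹) := by rw [mul_assoc]
        _ = α * (x * y' * x⁻¹) * (y'⁻¹ * α⁻¹) := by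
            have h1' : α⁻¹ * y'⁻¹ = y'⁻¹ * α⁻¹ := by
              rw [← mul_inv_rev, ← h1, mul_inv_rev]
            rw [h1']
        _ = α * (x * y' * x⁻¹ * y'⁻¹) * α⁻¹ := by group
    rw [this, h2]; group
  -- Conjugation by b ∈ B moves to the left component
  have ConjB : ∀ b ∈ B, ∀ x ∈ A, ∀ y ∈ B, b * ⁅x, y⁆ * b⁻¹ = ⁅b * x * b⁻¹, y⁆ := by
    intro b hb x hx y hy
    have hx' : b * x * b⁻¹ ∈ A := nA.conj_mem x hx b
    have hβ : ⁅b, y⁆ ∈ B' := by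
      rw [hB', derivedSeries_succ]
      exact Subgroup.commutator_mem_commutator hb hy
    have key : b * ⁅x, y⁆ * b⁻¹ = ⁅b * x * b⁻¹, ⁅b, y⁆ * y⁆ := by
      simp only [commutatorElement_def]; group
    rw [key]
    set β := ⁅b, y⁆ with hβdef
    set x' := b * x * b⁻¹ with hx'def
    have h1 : x' * β = β * x' := C2 x' hx' β hβ
    have h2 : β * ⁅x', y⁆ = ⁅x', y⁆ * β := L3 β hβ x' hx' y hy
    have : ⁅x', β * y⁆ = β * ⁅x', y⁆ * β⁻¹ := by
      rw [commutatorElement_def, commutatorElement_def]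
      calc x' * (β * y) * x'⁻¹ * (β * y)⁻¹
          = (x' * β) * (y * x'⁻¹ * y⁻¹) * β⁻¹ := by group
        _ = (β * x') * (y * x'⁻¹ * y⁻¹) * β⁻¹ := by rw [h1]
        _ = β * (x' * y * x'⁻¹ * y⁻¹) * β⁻¹ := by group
    rw [this, h2]; group
  -- Key: generators of ⁅A, B⁆ pairwise commute
  have key : ∀ a ∈ A, ∀ b ∈ B, ∀ a' ∈ A, ∀ b' ∈ B,
      ⁅a, b⁆ * ⁅a', b'⁆ = ⁅a', b'⁆ * ⁅a, b⁆ := by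
    intro a ha b hb a' ha' b' hb'
    have step1 : b⁻¹ * ⁅a', b'⁆ * b = ⁅b⁻¹ * a' * b, b'⁆ := by
      have := ConjB b⁻¹ (B.inv_mem hb) a' ha' b' hb'
      simpa using this
    have ha'' : b⁻¹ * a' * b ∈ A := by simpa using nA.conj_mem a' ha' b⁻¹
    have step2 : a⁻¹ * ⁅b⁻¹ * a' * b, b'⁆ * a = ⁅b⁻¹ * a' * b, a⁻¹ * b' * a⁆ := by
      have := ConjA a⁻¹ (A.inv_mem ha) _ ha'' b' hb'
      simpa using this
    have hb'' : a⁻¹ * b' * a ∈ B := by simpa using nB.conj_mem b' hb' a⁻¹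
    have step3 : b * ⁅b⁻¹ * a' * b, a⁻¹ * b' * a⁆ * b⁻¹ = ⁅a', a⁻¹ * b' * a⁆ := by
      have := ConjB b hb _ ha'' _ hb''
      rw [this]
      congr 1
      group
    have step4 : a * ⁅a', a⁻¹ * b' * a⁆ * a⁻¹ = ⁅a', b'⁆ := by
      have := ConjA a ha a' ha' _ hb''
      rw [this]
      congr 1
      group
    have : ⁅a, b⁆ * ⁅a', b'⁆ * ⁅a, b⁆⁻¹ = ⁅a', b'⁆ := by
      calc ⁅a, b⁆ * ⁅a', b'⁆ * ⁅a, b⁆⁻¹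
          = a * (b * (a⁻¹ * (b⁻¹ * ⁅a', b'⁆ * b) * a) * b⁻¹) * a⁻¹ := by
            rw [commutatorElement_def]; group
        _ = a * (b * (a⁻¹ * ⁅b⁻¹ * a' * b, b'⁆ * a) * b⁻¹) * a⁻¹ := by rw [step1]
        _ = a * (b * ⁅b⁻¹ * a' * b, a⁻¹ * b' * a⁆ * b⁻¹) * a⁻¹ := by rw [step2]
        _ = a * ⁅a', a⁻¹ * b' * a⁆ * a⁻¹ := by rw [step3]
        _ = ⁅a', b'⁆ := step4
    rw [mul_inv_eq_iff_eq_mul] at this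
    exact this
  -- Conclude
  intro x hx y hy
  have hcent : ⁅A, B⁆ ≤ Subgroup.centralizer (⁅A, B⁆ : Subgroup G) := by
    rw [Subgroup.commutator_le]
    intro a ha b hb
    rw [Subgroup.mem_centralizer_iff]
    intro h hh
    have : ⁅A, B⁆ ≤ Subgroup.centralizer {⁅a, b⁆} := by
      rw [Subgroup.commutator_le]
      intro a' ha' b' hb'
      rw [Subgroup.mem_centralizer_iff]
      intro g hg
      rw [Set.mem_singleton_iff] at hg
      subst hg
      exact key a ha b hb a' ha' b' hb'
    have := this hh
    rw [Subgroup.mem_centralizer_iff] at this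
    exact (this ⁅a, b⁆ rfl).symm
  have := hcent hy
  rw [Subgroup.mem_centralizer_iff] at this
  exact this x hx
end

section
/- Let G be a group and M a normal abelian subgroup of G. Suppose G/M is generated by the images of elements b₁, …, b_s ∈ G. Then [M, G] = ∏_{i=1}^{s} [M, b_i], where [M, b_i] denotes the subgroup generated by commutators [m, b_i] with m ∈ M. -/
open scoped commutatorElement

theorem stmt_5 {G : Type*} [Group G] (M : Subgroup G) [M.Normal]
    (hab : ∀ x ∈ M, ∀ y ∈ M, x * y = y * x)
    (s : ℕ) (b : Fin s → G)
    (hgen : Subgroup.closure (Set.range fun i => (QuotientGroup.mk (b i) : G ⧸ M)) = ⊤) :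
    ⁅M, (⊤ : Subgroup G)⁆ =
      ⨆ i : Fin s, Subgroup.closure ((fun m => ⁅m, b i⁆) '' (M : Set G)) := by
  set N : Subgroup G := ⨆ i : Fin s, Subgroup.closure ((fun m => ⁅m, b i⁆) '' (M : Set G))
    with hNdef
  -- N ≤ M
  have hNM : N ≤ M := by
    refine iSup_le fun i => (Subgroup.closure_le M).2 ?_
    rintro _ ⟨m, hm, rfl⟩
    have : b i * m⁻¹ * (b i)⁻¹ ∈ M := Subgroup.Normal.conj_mem ‹M.Normal› _ (inv_mem hm) _
    have : m * (b i * m⁻¹ * (b i)⁻¹) ∈ M := mul_mem hm this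
    simpa [commutatorElement_def, mul_assoc] using this
  -- the set of g such that all commutators [m,g] lie in N is a subgroup
  set S : Subgroup G :=
    { carrier := {g : G | ∀ m ∈ M, ⁅m, g⁆ ∈ N}
      one_mem' := by intro m hm; simpa using one_mem N
      mul_mem' := by
        intro g h hg hh m hm
        have hn : ⁅m, h⁆ ∈ N := hh m hm
        have hnM : ⁅m, h⁆ ∈ M := hNM hn
        have h2 : ⁅⁅m, h⁆, g⁆ ∈ N := hg _ hnM
        have key : ⁅m, g * h⁆ = ⁅m, g⁆ * (⁅⁅m, h⁆, g⁆⁻¹ * ⁅m, h⁆) := by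
          simp only [commutatorElement_def]; group
        rw [key]
        exact mul_mem (hg m hm) (mul_mem (inv_mem h2) hn)
      inv_mem' := by
        intro g hg m hm
        have hm' : g⁻¹ * m * g ∈ M := by
          simpa using Subgroup.Normal.conj_mem ‹M.Normal› _ hm g⁻¹
        have key : ⁅m, g⁻¹⁆ = ⁅g⁻¹ * m * g, g⁆⁻¹ := by
          simp only [commutatorElement_def]; group
        rw [key]
        exact inv_mem (hg _ hm') } with hSdef
  -- M ≤ S
  have hMS : ∀ m' ∈ M, m' ∈ S := by
    intro m' hm' m hm
    have : ⁅m, m'⁆ = 1 := by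
      simp only [commutatorElement_def]
      rw [hab m hm m' hm']; group
    rw [this]; exact one_mem N
  -- b i ∈ S
  have hbS : ∀ i, b i ∈ S := by
    intro i m hm
    exact Subgroup.mem_iSup_of_mem i (Subgroup.subset_closure ⟨m, hm, rfl⟩)
  -- S = ⊤ via generation
  have hS_top : ∀ g : G, g ∈ S := by
    intro g
    have h1 : (QuotientGroup.mk g : G ⧸ M) ∈
        Subgroup.map (QuotientGroup.mk' M) (Subgroup.closure (Set.range b)) := by
      rw [MonoidHom.map_closure]
      have : (QuotientGroup.mk' M) '' Set.range b
          = Set.range fun i => (QuotientGroup.mk (b i) : G ⧸ M) := by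
        ext x; simp [Set.range_comp, QuotientGroup.mk'_apply]
      rw [this, hgen]; trivial
    obtain ⟨x, hx, hxg⟩ := h1
    have hxS : x ∈ S := by
      refine Subgroup.closure_induction ?_ (one_mem S) (fun a c _ _ ha hc => mul_mem ha hc)
        (fun a _ ha => inv_mem ha) hx
      rintro _ ⟨i, rfl⟩; exact hbS i
    have hx2 : x⁻¹ * g ∈ M := by
      rw [← QuotientGroup.eq]
      exact hxg.symm ▸ rfl
    have : g = x * (x⁻¹ * g) := by group
    rw [this]
    exact mul_mem hxS (hMS _ hx2)
  -- conclude
  apply le_antisymm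
  · rw [Subgroup.commutator_le]
    intro m hm g _
    exact hS_top g m hm
  · refine iSup_le fun i => (Subgroup.closure_le _).2 ?_
    rintro _ ⟨m, hm, rfl⟩
    exact Subgroup.commutator_mem_commutator hm (Subgroup.mem_top _)
end

section
/- Let G be a group, M a normal abelian subgroup of G, and suppose G/M is generated by the images of b₁, …, b_s ∈ G. Then for every k ≥ 1, the k-fold commutator subgroup [M, G, …, G] (with G appearing k times) equals the product of the subgroups [M, b_{i₁}, …, b_{i_k}] taken over all choices of indices i₁, …, i_k ∈ {1, …, s}. -/
open scoped commutatorElement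

/-- The iterated commutator subgroup `[M, G, …, G]` with `G` appearing `k` times. -/
def iterCommTop {G : Type*} [Group G] (M : Subgroup G) : ℕ → Subgroup G
  | 0 => M
  | k + 1 => ⁅iterCommTop M k, (⊤ : Subgroup G)⁆

/-- The iterated subgroup `[M, b₁, …, b_k]`, where at each step `[H, b]` denotes
the subgroup generated by the commutators `[h, b]` with `h ∈ H`. -/
def iterCommElts {G : Type*} [Group G] (M : Subgroup G) (l : List G) : Subgroup G :=
  l.foldl (fun H b => Subgroup.closure ((fun h => ⁅h, b⁆) '' (H : Set G))) M

namespace Stmt6Aux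

variable {G : Type*} [Group G]

/-- `[H, x]`, the subgroup generated by commutators of elements of `H` with `x`. -/
def cm (x : G) (H : Subgroup G) : Subgroup G :=
  Subgroup.closure ((fun h => ⁅h, x⁆) '' (H : Set G))

lemma iterCommElts_cons (M : Subgroup G) (x : G) (l : List G) :
    iterCommElts M (x :: l) = iterCommElts (cm x M) l := rfl

lemma iterCommElts_concat (M : Subgroup G) (l : List G) (x : G) :
    iterCommElts M (l ++ [x]) = cm x (iterCommElts M l) := by
  simp [iterCommElts, List.foldl_append, cm]

lemma comm_mem_of_normal {P : Subgroup G} (hP : P.Normal) {x : G} (hx : x ∈ P) (g : G) :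
    ⁅x, g⁆ ∈ P := by
  have h : ⁅x, g⁆ = x * (g * x⁻¹ * g⁻¹) := by group
  rw [h]
  exact P.mul_mem hx (hP.conj_mem _ (P.inv_mem hx) g)

lemma cm_le_of_le {M : Subgroup G} [hM : M.Normal] {H : Subgroup G} (h : H ≤ M) (x : G) :
    cm x H ≤ M := by
  refine (Subgroup.closure_le _).2 ?_
  rintro _ ⟨n, hn, rfl⟩
  exact comm_mem_of_normal hM (h hn) x

lemma iterCommElts_le {M : Subgroup G} [M.Normal] :
    ∀ (l : List G) (N : Subgroup G), N ≤ M → iterCommElts N l ≤ M := by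
  intro l
  induction l with
  | nil => intro N h; exact h
  | cons x l ih =>
      intro N h
      rw [iterCommElts_cons]
      exact ih _ (cm_le_of_le h x)

section Abelian

variable {M : Subgroup G} [hM : M.Normal]
  (hab : ∀ x ∈ M, ∀ y ∈ M, x * y = y * x)

include hab in
/-- On `M`, commutation with a fixed element is multiplicative. -/
lemma comm_mul {x y : G} (hx : x ∈ M) (hy : y ∈ M) (g : G) :
    ⁅x * y, g⁆ = ⁅x, g⁆ * ⁅y, g⁆ := by
  have h1 : ⁅x * y, g⁆ = x * (⁅y, g⁆ * (g * x⁻¹ * g⁻¹)) := by group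
  have h2 : ⁅y, g⁆ * (g * x⁻¹ * g⁻¹) = (g * x⁻¹ * g⁻¹) * ⁅y, g⁆ :=
    hab _ (comm_mem_of_normal hM hy g) _ (hM.conj_mem _ (M.inv_mem hx) g)
  rw [h1, h2]
  group

include hab in
lemma cm_iSup {ι : Sort*} (A : ι → Subgroup G) (hA : ∀ i, A i ≤ M) (x : G) :
    cm x (⨆ i, A i) = ⨆ i, cm x (A i) := by
  apply le_antisymm
  · refine (Subgroup.closure_le _).2 ?_
    rintro _ ⟨h, hh, rfl⟩
    refine Subgroup.iSup_induction' (C := fun y _ => ⁅y, x⁆ ∈ ⨆ i, cm x (A i)) A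
      ?_ ?_ ?_ hh
    · intro i y hy
      exact le_iSup (fun i => cm x (A i)) i (Subgroup.subset_closure ⟨y, hy, rfl⟩)
    · simpa using Subgroup.one_mem _
    · intro y z hy hz hCy hCz
      have hyM : y ∈ M := (iSup_le hA) hy
      have hzM : z ∈ M := (iSup_le hA) hz
      rw [comm_mul hab hyM hzM]
      exact Subgroup.mul_mem _ hCy hCz
  · refine iSup_le fun i => Subgroup.closure_mono ?_
    exact Set.image_mono (SetLike.coe_subset_coe.2 (le_iSup A i))

variable {s : ℕ} {b : Fin s → G}
  (hgen : Subgroup.closure (Set.range fun i => (QuotientGroup.mk (b i) : G ⧸ M)) = ⊤)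

include hgen in
lemma sup_eq_top : M ⊔ Subgroup.closure (Set.range b) = ⊤ := by
  have hmap : Subgroup.map (QuotientGroup.mk' M) (M ⊔ Subgroup.closure (Set.range b)) = ⊤ := by
    rw [Subgroup.map_sup, MonoidHom.map_closure]
    have himg : (QuotientGroup.mk' M) '' Set.range b
        = Set.range fun i => (QuotientGroup.mk (b i) : G ⧸ M) := by
      rw [← Set.range_comp]; rfl
    rw [himg, hgen, sup_top_eq]
  have h := congrArg (Subgroup.comap (QuotientGroup.mk' M)) hmap
  rw [Subgroup.comap_map_eq, QuotientGroup.ker_mk', Subgroup.comap_top] at h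
  rwa [sup_eq_left.2 (le_sup_left : M ≤ M ⊔ Subgroup.closure (Set.range b))] at h

include hab hgen in
/-- Lemma B: for `N ≤ M` normal, `[N, G] = ⨆ⱼ [N, bⱼ]`. -/
lemma commutator_top_eq (N : Subgroup G) (hN : N.Normal) (hNM : N ≤ M) :
    ⁅N, (⊤ : Subgroup G)⁆ = ⨆ j : Fin s, cm (b j) N := by
  set K := ⨆ j : Fin s, cm (b j) N with hK
  have hgenK : ∀ (j : Fin s) {n : G}, n ∈ N → ⁅n, b j⁆ ∈ K := by
    intro j n hn
    have h1 : ⁅n, b j⁆ ∈ Subgroup.closure ((fun h => ⁅h, b j⁆) '' (N : Set G)) :=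
      Subgroup.subset_closure ⟨_, hn, rfl⟩
    exact Subgroup.mem_iSup_of_mem j h1
  have hKN : K ≤ N := by
    refine iSup_le fun j => (Subgroup.closure_le _).2 ?_
    rintro _ ⟨n, hn, rfl⟩
    exact comm_mem_of_normal hN hn (b j)
  have hKM : K ≤ M := hKN.trans hNM
  -- K is a normal subgroup of G
  have hKnormal : K.Normal := by
    let H : Subgroup G :=
      { carrier := {g | ∀ x ∈ K, g * x * g⁻¹ ∈ K ∧ g⁻¹ * x * g ∈ K}
        one_mem' := by
          intro x hx
          refine ⟨?_, ?_⟩ <;> simpa using hx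
        mul_mem' := by
          intro a c ha hc
          intro x hx
          constructor
          · have h1 := (hc x hx).1
            have h2 := (ha _ h1).1
            have he : a * c * x * (a * c)⁻¹ = a * (c * x * c⁻¹) * a⁻¹ := by group
            rw [he]; exact h2
          · have h1 := (ha x hx).2
            have h2 := (hc _ h1).2
            have he : (a * c)⁻¹ * x * (a * c) = c⁻¹ * (a⁻¹ * x * a) * c := by group
            rw [he]; exact h2
        inv_mem' := by
          intro a ha x hx
          simp only [inv_inv]
          exact ⟨(ha x hx).2, (ha x hx).1⟩ }
    have hMH : ∀ m ∈ M, m ∈ H := by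
      intro m hm x hx
      constructor
      · have he : m * x * m⁻¹ = x := by
          rw [hab m hm x (hKM hx)]; group
        rw [he]; exact hx
      · have he : m⁻¹ * x * m = x := by
          rw [hab m⁻¹ (M.inv_mem hm) x (hKM hx)]; group
        rw [he]; exact hx
    have hbH : ∀ j : Fin s, b j ∈ H := by
      intro j x hx
      constructor
      · have he : b j * x * (b j)⁻¹ = ⁅x, b j⁆⁻¹ * x := by group
        rw [he]
        exact K.mul_mem (K.inv_mem (hgenK j (hKN hx))) hx
      · have hz : (b j)⁻¹ * x * b j ∈ N := by
          have := hN.conj_mem x (hKN hx) (b j)⁻¹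
          simpa using this
        have he : (b j)⁻¹ * x * b j = ⁅(b j)⁻¹ * x * b j, b j⁆ * x := by group
        rw [he]
        exact K.mul_mem (hgenK j hz) hx
    have htop : ∀ g : G, g ∈ H := by
      intro g
      have hg : g ∈ M ⊔ Subgroup.closure (Set.range b) := by
        rw [sup_eq_top hgen]; trivial
      exact (sup_le (fun m hm => hMH m hm)
        ((Subgroup.closure_le H).2 (by rintro _ ⟨j, rfl⟩; exact hbH j))) hg
    exact ⟨fun x hx g => ((htop g) x hx).1⟩
  -- equality
  apply le_antisymm
  · rw [Subgroup.commutator_le]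
    intro n hn g _
    have hg : g ∈ Subgroup.closure ((M : Set G) ∪ Set.range b) := by
      rw [Subgroup.closure_union, Subgroup.closure_eq, sup_eq_top hgen]
      trivial
    revert n
    refine Subgroup.closure_induction
      (p := fun g _ => ∀ n ∈ N, ⁅n, g⁆ ∈ K) ?_ ?_ ?_ ?_ hg
    · rintro x (hxM | ⟨j, rfl⟩) n hn
      · have h1 : ⁅n, x⁆ = 1 :=
          commutatorElement_eq_one_iff_mul_comm.2 (hab n (hNM hn) x hxM)
        rw [h1]; exact K.one_mem
      · exact hgenK j hn
    · intro n hn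
      simpa using K.one_mem
    · intro g h _ _ pg ph n hn
      have key : ⁅n, g * h⁆ = ⁅n, g⁆ * (g * ⁅n, h⁆ * g⁻¹) := by group
      rw [key]
      exact K.mul_mem (pg n hn) (hKnormal.conj_mem _ (ph n hn) g)
    · intro g _ pg n hn
      have hz : g⁻¹ * n⁻¹ * g ∈ N := by
        have := hN.conj_mem n⁻¹ (N.inv_mem hn) g⁻¹
        simpa using this
      have key : ⁅n, g⁻¹⁆ = n * ⁅g⁻¹ * n⁻¹ * g, g⁆ * n⁻¹ := by group
      rw [key]
      exact hKnormal.conj_mem _ (pg _ hz) n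
  · refine iSup_le fun j => (Subgroup.closure_le _).2 ?_
    rintro _ ⟨n, hn, rfl⟩
    exact Subgroup.commutator_mem_commutator hn (Subgroup.mem_top _)

lemma iterCommTop_le (k : ℕ) : iterCommTop M k ≤ M := by
  induction k with
  | zero => exact le_rfl
  | succ k ih =>
      show ⁅iterCommTop M k, (⊤ : Subgroup G)⁆ ≤ M
      rw [Subgroup.commutator_le]
      intro x hx g _
      exact comm_mem_of_normal hM (ih hx) g

lemma iterCommTop_normal (k : ℕ) : (iterCommTop M k).Normal := by
  induction k with
  | zero => exact hM
  | succ k ih =>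
      show (⁅iterCommTop M k, (⊤ : Subgroup G)⁆).Normal
      exact @Subgroup.commutator_normal _ _ _ _ ih ⟨by simp⟩

include hab hgen in
lemma main : ∀ k : ℕ,
    iterCommTop M k = ⨆ c : Fin k → Fin s, iterCommElts M (List.ofFn fun j => b (c j)) := by
  intro k
  induction k with
  | zero =>
      haveI : Nonempty (Fin 0 → Fin s) := ⟨Fin.elim0⟩
      have h : ∀ c : Fin 0 → Fin s,
          iterCommElts M (List.ofFn fun j => b (c j)) = M := by
        intro c; simp [iterCommElts]
      simp only [h, iSup_const]
      rfl
  | succ k ih =>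
      have hN : (iterCommTop M k).Normal := iterCommTop_normal k
      have hNM : iterCommTop M k ≤ M := iterCommTop_le k
      have hA : ∀ c : Fin k → Fin s,
          iterCommElts M (List.ofFn fun j => b (c j)) ≤ M := fun c =>
        iterCommElts_le _ M le_rfl
      have hsplit : ∀ c : Fin (k + 1) → Fin s,
          iterCommElts M (List.ofFn fun j => b (c j))
            = cm (b (c (Fin.last k)))
                (iterCommElts M (List.ofFn fun i : Fin k => b (c i.castSucc))) := by
        intro c
        rw [List.ofFn_succ' (fun j => b (c j)), List.concat_eq_append,
          iterCommElts_concat]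
      show ⁅iterCommTop M k, (⊤ : Subgroup G)⁆ = _
      rw [commutator_top_eq hab hgen _ hN hNM, ih]
      have hdist : ∀ j : Fin s,
          cm (b j) (⨆ c : Fin k → Fin s, iterCommElts M (List.ofFn fun i => b (c i)))
            = ⨆ c : Fin k → Fin s, cm (b j) (iterCommElts M (List.ofFn fun i => b (c i))) :=
        fun j => cm_iSup hab _ hA (b j)
      simp only [hdist]
      apply le_antisymm
      · refine iSup_le fun j => iSup_le fun c' => ?_
        have h := le_iSup
          (fun c : Fin (k + 1) → Fin s => iterCommElts M (List.ofFn fun i => b (c i)))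
          (Fin.snoc c' j)
        rw [hsplit (Fin.snoc c' j)] at h
        simpa only [Fin.snoc_last, Fin.snoc_castSucc] using h
      · refine iSup_le fun c => ?_
        rw [hsplit c]
        refine le_trans ?_ (le_iSup _ (c (Fin.last k)))
        exact le_iSup
          (fun c' : Fin k → Fin s =>
            cm (b (c (Fin.last k))) (iterCommElts M (List.ofFn fun i => b (c' i))))
          (fun i => c i.castSucc)

end Abelian

end Stmt6Aux

theorem stmt_6 {G : Type*} [Group G] (M : Subgroup G) [M.Normal]
    (hab : ∀ x ∈ M, ∀ y ∈ M, x * y = y * x)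
    (s : ℕ) (b : Fin s → G)
    (hgen : Subgroup.closure (Set.range fun i => (QuotientGroup.mk (b i) : G ⧸ M)) = ⊤)
    (k : ℕ) (hk : 1 ≤ k) :
    iterCommTop M k = ⨆ c : Fin k → Fin s, iterCommElts M (List.ofFn fun j => b (c j)) :=
  Stmt6Aux.main hab hgen k
end

section
/- Let G be a compact topological group which is abelian and periodic (every element has finite order), and suppose G is profinite. Then G has finite exponent, i.e., there exists a positive integer e with xᵉ = 1 for all x ∈ G. -/
theorem stmt_12 {G : Type*} [CommGroup G] [TopologicalSpace G] [IsTopologicalGroup G]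
    [CompactSpace G] [T2Space G] [TotallyDisconnectedSpace G]
    (hper : ∀ x : G, IsOfFinOrder x) :
    ∃ e : ℕ, 0 < e ∧ ∀ x : G, x ^ e = 1 := by
  -- the subgroups H n = {x : x ^ n! = 1}
  let H : ℕ → Subgroup G := fun n =>
    { carrier := {x | x ^ (n.factorial) = 1}
      one_mem' := one_pow _
      mul_mem' := by
        intro a b ha hb
        simp only [Set.mem_setOf_eq] at *
        rw [mul_pow, ha, hb, one_mul]
      inv_mem' := by
        intro a ha
        simp only [Set.mem_setOf_eq] at *
        rw [inv_pow, ha, inv_one] }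
  have hclosed : ∀ n, IsClosed ((H n : Set G)) := by
    intro n
    exact isClosed_eq (continuous_pow _) continuous_const
  have hcover : (⋃ n, (H n : Set G)) = Set.univ := by
    ext x
    simp only [Set.mem_iUnion, Set.mem_univ, iff_true]
    obtain ⟨n, hn, hxn⟩ := (hper x).exists_pow_eq_one
    refine ⟨n, ?_⟩
    show x ^ n.factorial = 1
    obtain ⟨k, hk⟩ := Nat.dvd_factorial hn le_rfl
    rw [hk, pow_mul, hxn, one_pow]
  obtain ⟨n, x, hx⟩ := nonempty_interior_of_iUnion_of_closed hclosed hcover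
  -- H n is open
  have hopen : IsOpen ((H n : Set G)) :=
    Subgroup.isOpen_of_mem_nhds _ (mem_nhds_iff.mpr ⟨interior _, interior_subset,
      isOpen_interior, hx⟩)
  have : Finite (G ⧸ H n) := Subgroup.quotient_finite_of_isOpen _ hopen
  have : (H n).FiniteIndex := (H n).finiteIndex_of_finite_quotient
  refine ⟨n.factorial * (H n).index, ?_, ?_⟩
  · exact Nat.mul_pos n.factorial_pos (Nat.pos_of_ne_zero Subgroup.FiniteIndex.index_ne_zero)
  · intro y
    rw [mul_comm, pow_mul]
    exact (H n).pow_index_mem y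
end

section
/- Let G be a profinite group with an open normal soluble subgroup, and assume G is periodic. Then G has finite exponent and is locally finite. -/
open scoped commutatorElement

section IterComm

variable {G : Type*} [Group G]

/-- Iterated commutator series of a subgroup, computed with ambient commutators. -/
def iterComm (S : Subgroup G) : ℕ → Subgroup G
  | 0 => S
  | n + 1 => ⁅iterComm S n, iterComm S n⁆

lemma iterComm_succ (S : Subgroup G) (n : ℕ) :
    iterComm S (n + 1) = ⁅iterComm S n, iterComm S n⁆ := rfl

lemma iterComm_normal (S : Subgroup G) (h : S.Normal) : ∀ n, (iterComm S n).Normal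
  | 0 => h
  | n + 1 => by
      haveI := iterComm_normal S h n
      exact Subgroup.commutator_normal _ _

lemma iterComm_mono {K L : Subgroup G} (h : K ≤ L) : ∀ n, iterComm K n ≤ iterComm L n
  | 0 => h
  | n + 1 => Subgroup.commutator_mono (iterComm_mono h n) (iterComm_mono h n)

lemma iterComm_eq_map (S : Subgroup G) :
    ∀ n, iterComm S n = (derivedSeries S n).map S.subtype
  | 0 => by
      rw [show iterComm S 0 = S from rfl, derivedSeries_zero, ← MonoidHom.range_eq_map,
        S.range_subtype]
  | n + 1 => by
      rw [iterComm_succ, derivedSeries_succ, Subgroup.map_commutator, ← iterComm_eq_map S n]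

end IterComm

section Closure

variable {G : Type*} [Group G] [TopologicalSpace G] [IsTopologicalGroup G]

lemma commutator_topologicalClosure_le (K L : Subgroup G) :
    ⁅K.topologicalClosure, L.topologicalClosure⁆ ≤ ⁅K, L⁆.topologicalClosure := by
  rw [Subgroup.commutator_le]
  have hcont : ∀ y : G, Continuous fun x : G => ⁅x, y⁆ := by
    intro y; simp only [commutatorElement_def]; continuity
  have hcont' : ∀ x : G, Continuous fun y : G => ⁅x, y⁆ := by
    intro x; simp only [commutatorElement_def]; continuity
  have step1 : ∀ x ∈ closure (K : Set G), ∀ y ∈ (L : Set G),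
      ⁅x, y⁆ ∈ closure ((⁅K, L⁆ : Subgroup G) : Set G) := by
    intro x hx y hy
    have hsub : closure (K : Set G) ⊆
        (fun x : G => ⁅x, y⁆) ⁻¹' closure ((⁅K, L⁆ : Subgroup G) : Set G) :=
      closure_minimal (fun a ha => subset_closure (Subgroup.commutator_mem_commutator ha hy))
        (isClosed_closure.preimage (hcont y))
    exact hsub hx
  intro x hx y hy
  have hx' : x ∈ closure (K : Set G) := hx
  have hy' : y ∈ closure (L : Set G) := hy
  have hsub : closure (L : Set G) ⊆
      (fun y : G => ⁅x, y⁆) ⁻¹' closure ((⁅K, L⁆ : Subgroup G) : Set G) :=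
    closure_minimal (fun b hb => step1 x hx' b hb) (isClosed_closure.preimage (hcont' x))
  exact hsub hy'

end Closure

section Baire

variable {G : Type*} [Group G] [TopologicalSpace G] [IsTopologicalGroup G]
  [CompactSpace G] [T2Space G] [TotallyDisconnectedSpace G]

/-- Baire-category argument: in a profinite group which is "periodic modulo `T`" and abelian
modulo the closed normal subgroup `T`, some uniform power lands in `T`. -/
lemma exists_pow_mem_of_abelian_mod (T : Subgroup G) [T.Normal]
    (hT : IsClosed (T : Set G))
    (hcomm : ∀ x y : G, ⁅x, y⁆ ∈ T)
    (hper : ∀ x : G, ∃ n, 0 < n ∧ x ^ n ∈ T) :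
    ∃ e, 0 < e ∧ ∀ x : G, x ^ e ∈ T := by
  -- the quotient is commutative
  have hQcomm : ∀ a b : G ⧸ T, a * b = b * a := by
    intro a b
    induction a using QuotientGroup.induction_on with
    | H x =>
    induction b using QuotientGroup.induction_on with
    | H y =>
    rw [← QuotientGroup.mk_mul, ← QuotientGroup.mk_mul, QuotientGroup.eq]
    have h : (x * y)⁻¹ * (y * x) = ⁅y⁻¹, x⁻¹⁆ := by
      simp [commutatorElement_def, mul_assoc]
    rw [h]
    exact hcomm _ _
  have key : ∀ (x : G) (n : ℕ), x ^ n ∈ T ↔ (QuotientGroup.mk x : G ⧸ T) ^ n = 1 := by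
    intro x n
    rw [← QuotientGroup.mk_pow, QuotientGroup.eq_one_iff]
  -- Baire category
  set C : ℕ → Set G := fun n => {x : G | x ^ (n + 1) ∈ T} with hC
  have hCclosed : ∀ n, IsClosed (C n) := by
    intro n
    have : C n = (fun x : G => x ^ (n + 1)) ⁻¹' (T : Set G) := rfl
    rw [this]
    exact hT.preimage (continuous_pow (n + 1))
  have hCcover : ⋃ n, C n = Set.univ := by
    ext x
    simp only [Set.mem_iUnion, Set.mem_univ, iff_true]
    obtain ⟨n, hn, hxn⟩ := hper x
    exact ⟨n - 1, show x ^ (n - 1 + 1) ∈ T by rw [Nat.sub_add_cancel hn]; exact hxn⟩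
  obtain ⟨n, x0, hx0⟩ := nonempty_interior_of_iUnion_of_closed hCclosed hCcover
  -- translate to a neighbourhood of 1
  set W : Set G := (fun g => g * x0⁻¹) '' interior (C n) with hW
  have hWopen : IsOpen W := (Homeomorph.mulRight x0⁻¹).isOpen_image.mpr isOpen_interior
  have h1W : (1 : G) ∈ W := ⟨x0, hx0, mul_inv_cancel x0⟩
  have hx0C : x0 ∈ C n := interior_subset hx0
  have hWC : ∀ w ∈ W, w ^ (n + 1) ∈ T := by
    rintro w ⟨y, hy, rfl⟩
    have hyC : y ∈ C n := interior_subset hy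
    rw [key]
    have hcomm' : Commute (QuotientGroup.mk y : G ⧸ T) ((QuotientGroup.mk x0 : G ⧸ T)⁻¹) :=
      hQcomm _ _
    calc (QuotientGroup.mk (y * x0⁻¹) : G ⧸ T) ^ (n + 1)
        = ((QuotientGroup.mk y : G ⧸ T) * (QuotientGroup.mk x0 : G ⧸ T)⁻¹) ^ (n + 1) := by
          rw [QuotientGroup.mk_mul, QuotientGroup.mk_inv]
      _ = (QuotientGroup.mk y : G ⧸ T) ^ (n + 1) *
            ((QuotientGroup.mk x0 : G ⧸ T)⁻¹) ^ (n + 1) := hcomm'.mul_pow _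
      _ = 1 := by
          have h1 : (QuotientGroup.mk y : G ⧸ T) ^ (n + 1) = 1 := (key y (n + 1)).mp hyC
          have h2 : (QuotientGroup.mk x0 : G ⧸ T) ^ (n + 1) = 1 := (key x0 (n + 1)).mp hx0C
          rw [inv_pow, h1, h2]
          simp
  -- find an open normal subgroup inside W
  obtain ⟨V, hVclopen, h1V, hVW⟩ := compact_exists_isClopen_in_isOpen hWopen h1W
  obtain ⟨H, hHV⟩ := IsTopologicalGroup.exist_openNormalSubgroup_sub_clopen_nhds_of_one hVclopen h1V
  haveI : Finite (G ⧸ H.toSubgroup) :=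
    Subgroup.quotient_finite_of_isOpen H.toSubgroup H.toOpenSubgroup.isOpen
  haveI : H.toSubgroup.FiniteIndex := Subgroup.finiteIndex_of_finite_quotient
  refine ⟨H.toSubgroup.index * (n + 1), ?_, ?_⟩
  · exact Nat.pos_of_ne_zero (by
      simp [Nat.mul_eq_zero, Subgroup.FiniteIndex.index_ne_zero])
  · intro x
    have hxH : x ^ H.toSubgroup.index ∈ H.toSubgroup := Subgroup.pow_index_mem _ x
    have hxW : x ^ H.toSubgroup.index ∈ W := hVW (hHV hxH)
    rw [pow_mul]
    exact hWC _ hxW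

/-- Induction on the iterated-commutator length: closed normal "soluble" subgroups of a
periodic profinite group have finite exponent. -/
lemma exists_exponent_of_closed_solvable (hper : ∀ x : G, IsOfFinOrder x) :
    ∀ (d : ℕ) (S : Subgroup G), S.Normal → IsClosed (S : Set G) → iterComm S d = ⊥ →
      ∃ e, 0 < e ∧ ∀ x ∈ S, x ^ e = 1 := by
  intro d
  induction d with
  | zero =>
      intro S _ _ hbot
      refine ⟨1, one_pos, fun x hx => ?_⟩
      have : x ∈ (⊥ : Subgroup G) := hbot ▸ hx
      simpa using this
  | succ d ih =>
      intro S hSnorm hSclosed hbot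
      haveI := hSnorm
      set T : Subgroup G := (⁅S, S⁆ : Subgroup G).topologicalClosure with hTdef
      haveI hTnorm : T.Normal := Subgroup.is_normal_topologicalClosure _
      have hTclosed : IsClosed (T : Set G) := Subgroup.isClosed_topologicalClosure _
      -- the iterated commutators of T die at step d
      have hstep : ∀ k, iterComm T k ≤ (iterComm S (k + 1)).topologicalClosure := by
        intro k
        induction k with
        | zero => exact le_rfl
        | succ k ihk =>
            calc iterComm T (k + 1) = ⁅iterComm T k, iterComm T k⁆ := rfl
              _ ≤ ⁅(iterComm S (k + 1)).topologicalClosure,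
                    (iterComm S (k + 1)).topologicalClosure⁆ :=
                  Subgroup.commutator_mono ihk ihk
              _ ≤ (⁅iterComm S (k + 1), iterComm S (k + 1)⁆).topologicalClosure :=
                  commutator_topologicalClosure_le _ _
              _ = (iterComm S (k + 2)).topologicalClosure := by rw [← iterComm_succ]
      have hTbot : iterComm T d = ⊥ := by
        have h1 : iterComm T d ≤ (iterComm S (d + 1)).topologicalClosure := hstep d
        rw [hbot] at h1
        have h2 : (⊥ : Subgroup G).topologicalClosure ≤ ⊥ := by
          apply Subgroup.topologicalClosure_minimal _ le_rfl
          have : ((⊥ : Subgroup G) : Set G) = {1} := Subgroup.coe_bot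
          rw [this]
          exact isClosed_singleton
        exact le_bot_iff.mp (h1.trans h2)
      obtain ⟨e', he'pos, he'⟩ := ih T hTnorm hTclosed hTbot
      -- now apply the Baire lemma inside S
      haveI : CompactSpace S := isCompact_iff_compactSpace.mp hSclosed.isCompact
      have hT'closed : IsClosed ((T.subgroupOf S : Subgroup S) : Set S) := by
        have : ((T.subgroupOf S : Subgroup S) : Set S) = (Subtype.val : S → G) ⁻¹' T := rfl
        rw [this]
        exact hTclosed.preimage continuous_subtype_val
      have hcomm : ∀ x y : S, ⁅x, y⁆ ∈ T.subgroupOf S := by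
        intro x y
        rw [Subgroup.mem_subgroupOf]
        have hcoe : ((⁅x, y⁆ : S) : G) = ⁅(x : G), (y : G)⁆ := by
          simp [commutatorElement_def]
        rw [hcoe]
        exact Subgroup.le_topologicalClosure _
          (Subgroup.commutator_mem_commutator x.2 y.2)
      have hper' : ∀ x : S, ∃ n, 0 < n ∧ x ^ n ∈ T.subgroupOf S := by
        intro x
        obtain ⟨n, hn, hxn⟩ := (hper (x : G)).exists_pow_eq_one
        refine ⟨n, hn, ?_⟩
        rw [Subgroup.mem_subgroupOf]
        have : ((x ^ n : S) : G) = (x : G) ^ n := by push_cast; rfl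
        rw [this, hxn]
        exact T.one_mem
      obtain ⟨e, hepos, he⟩ := exists_pow_mem_of_abelian_mod (T.subgroupOf S)
        hT'closed hcomm hper'
      refine ⟨e * e', Nat.mul_pos hepos he'pos, fun x hx => ?_⟩
      have hxe : x ^ e ∈ T := by
        have := he ⟨x, hx⟩
        rw [Subgroup.mem_subgroupOf] at this
        simpa using this
      rw [pow_mul]
      exact he' _ hxe

end Baire

section LocallyFinite

/-- A finitely generated periodic soluble group is finite. -/
lemma finite_of_fg_torsion_solvable :
    ∀ (d : ℕ) (H : Type*) [Group H], Group.FG H → (∀ x : H, IsOfFinOrder x) →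
      derivedSeries H d = ⊥ → Finite H := by
  intro d
  induction d with
  | zero =>
      intro H _ _ _ hbot
      rw [derivedSeries_zero] at hbot
      haveI : Subsingleton H := by
        constructor
        intro a b
        have ha : a ∈ (⊥ : Subgroup H) := hbot ▸ Subgroup.mem_top a
        have hb : b ∈ (⊥ : Subgroup H) := hbot ▸ Subgroup.mem_top b
        rw [Subgroup.mem_bot] at ha hb
        rw [ha, hb]
      exact Finite.of_subsingleton
  | succ d ih =>
      intro H _ hfg htor hbot
      haveI := hfg
      set K : Subgroup H := commutator H with hK
      -- the abelianization is finite
      haveI : Group.FG (Abelianization H) :=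
        Group.fg_of_surjective (f := Abelianization.of (G := H))
          (Quotient.mk''_surjective)
      have habtor : Monoid.IsTorsion (Abelianization H) := by
        intro q
        induction q using Quotient.inductionOn' with
        | h z => exact (Abelianization.of (G := H)).isOfFinOrder (htor z)
      have habfin : Finite (Abelianization H) := CommGroup.finite_of_fg_torsion _ habtor
      haveI : Finite (H ⧸ K) := habfin
      haveI : K.FiniteIndex := Subgroup.finiteIndex_of_finite_quotient
      haveI : Group.FG K := Subgroup.fg_of_index_ne_zero _
      -- derived series of K
      have hmap : ∀ m, (derivedSeries K m).map K.subtype = derivedSeries H (m + 1) := by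
        intro m
        induction m with
        | zero =>
            rw [derivedSeries_zero, ← MonoidHom.range_eq_map, K.range_subtype,
              derivedSeries_succ, derivedSeries_zero]
            rfl
        | succ m ihm =>
            rw [derivedSeries_succ, Subgroup.map_commutator, ihm, ← derivedSeries_succ]
      have hKbot : derivedSeries K d = ⊥ := by
        have : (derivedSeries K d).map K.subtype = ⊥ := by rw [hmap d, hbot]
        rwa [Subgroup.map_eq_bot_iff, Subgroup.ker_subtype, le_bot_iff] at this
      have hKtor : ∀ x : K, IsOfFinOrder x := fun x => IsTorsion.subgroup htor K x
      haveI : Finite K := ih K inferInstance hKtor hKbot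
      exact Finite.of_equiv _ (Subgroup.groupEquivQuotientProdSubgroup (s := K)).symm

end LocallyFinite

theorem stmt_13 {G : Type*} [Group G] [TopologicalSpace G] [IsTopologicalGroup G]
    [CompactSpace G] [T2Space G] [TotallyDisconnectedSpace G]
    (N : Subgroup G) [N.Normal] (hNopen : IsOpen (N : Set G)) (hNsol : IsSolvable N)
    (hper : ∀ x : G, IsOfFinOrder x) :
    (∃ e : ℕ, 0 < e ∧ ∀ x : G, x ^ e = 1) ∧
      ∀ H : Subgroup G, H.FG → Finite H := by
  have hNclosed : IsClosed (N : Set G) := Subgroup.isClosed_of_isOpen N hNopen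
  haveI : Finite (G ⧸ N) := Subgroup.quotient_finite_of_isOpen N hNopen
  haveI : N.FiniteIndex := Subgroup.finiteIndex_of_finite_quotient
  obtain ⟨d, hd⟩ := hNsol.solvable
  have hiter : iterComm N d = ⊥ := by
    rw [iterComm_eq_map, hd, Subgroup.map_bot]
  constructor
  · -- finite exponent
    obtain ⟨e', he'pos, he'⟩ :=
      exists_exponent_of_closed_solvable hper d N inferInstance hNclosed hiter
    refine ⟨N.index * e', ?_, fun x => ?_⟩
    · exact Nat.mul_pos (Nat.pos_of_ne_zero Subgroup.FiniteIndex.index_ne_zero) he'pos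
    · rw [pow_mul]
      exact he' _ (Subgroup.pow_index_mem N x)
  · -- locally finite
    intro H hHfg
    set M : Subgroup H := N.subgroupOf H with hM
    have hMindex : M.index ≠ 0 := by
      have hdvd : N.relIndex H ∣ N.index := Subgroup.relIndex_dvd_index_of_normal N H
      have : N.relIndex H ≠ 0 := by
        intro h0
        rw [h0] at hdvd
        exact Subgroup.FiniteIndex.index_ne_zero (zero_dvd_iff.mp hdvd)
      exact this
    haveI : M.FiniteIndex := ⟨hMindex⟩
    haveI : Group.FG H := (Group.fg_iff_subgroup_fg H).mpr hHfg
    haveI : Group.FG M := Subgroup.fg_of_index_ne_zero _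
    -- M embeds into N, hence is solvable
    let f : M →* N :=
      { toFun := fun x => ⟨(x : H), x.2⟩
        map_one' := rfl
        map_mul' := fun a b => rfl }
    have hfinj : Function.Injective f := by
      intro a b hab
      have h1 := congrArg (Subtype.val : N → G) hab
      exact Subtype.ext (Subtype.ext h1)
    haveI : Group.IsSolvable M := haveI : Group.IsSolvable N := hNsol; solvable_of_solvable_injective hfinj
    obtain ⟨dM, hdM⟩ := (inferInstance : Group.IsSolvable M).solvable
    have hMtor : ∀ x : M, IsOfFinOrder x :=
      fun x => IsTorsion.subgroup (IsTorsion.subgroup hper H) M x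
    haveI : Finite M := finite_of_fg_torsion_solvable dM M inferInstance hMtor hdM
    exact Finite.of_equiv _ (Subgroup.groupEquivQuotientProdSubgroup (s := M)).symm
end
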